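/- Let d_w = log 5 / log 2, d_s = 2 · log 3 / log 5 and c > 0. Let μ be a Borel measure on (0,∞) satisfying ∫_{(0,∞)} u^{−d_s/2} dμ(u) < ∞ and ∫_1^∞ μ((x,∞)) · x^{−1} dx < ∞. Then ∫_{8/9}^∞ ( ∫_{(0,∞)} exp(−c · (x · u^{−1/d_w})^{d_w/(d_w−1)}) · u^{−d_s/2} dμ(u) ) x^{−1} dx < ∞. -/

import Mathlib

open MeasureTheory ENNReal
open scoped ENNReal
open intervalIntegral in
private lemma lint_inv_Ioc {a b : ℝ} (ha : 0 < a) (hab : a ≤ b) :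
    ∫⁻ x in Set.Ioc a b, ENNReal.ofReal x⁻¹ = ENNReal.ofReal (Real.log (b / a)) := by
  have hb : 0 < b := ha.trans_le hab
  have hii : IntervalIntegrable (fun x : ℝ => x⁻¹) volume a b := by
    apply intervalIntegral.intervalIntegrable_inv
    · intro x hx
      rw [Set.uIcc_of_le hab] at hx
      exact ne_of_gt (ha.trans_le hx.1)
    · exact continuous_id.continuousOn
  have hnn : 0 ≤ᵐ[volume.restrict (Set.Ioc a b)] fun x : ℝ => x⁻¹ :=
    (ae_restrict_iff' measurableSet_Ioc).2 (ae_of_all _ fun x hx =>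
      inv_nonneg.2 (ha.trans hx.1).le)
  rw [← ofReal_integral_eq_lintegral_ofReal hii.1 hnn]
  congr 1
  rw [← intervalIntegral.integral_of_le hab]
  exact integral_inv_of_pos ha hb

private lemma lint_exp_Ioi {r s : ℝ} (hr : 0 < r) (hs : 0 ≤ s) :
    ∫⁻ x in Set.Ioi s, ENNReal.ofReal (Real.exp (-(r * x))) ≤ ENNReal.ofReal (1 / r) := by
  have hint : MeasureTheory.IntegrableOn (fun x : ℝ => Real.exp (-(r * x))) (Set.Ioi s) := by
    simpa [neg_mul] using exp_neg_integrableOn_Ioi s hr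
  rw [← ofReal_integral_eq_lintegral_ofReal hint (ae_of_all _ fun x => (Real.exp_pos _).le)]
  have hval : (∫ x in Set.Ioi s, Real.exp (-(r * x))) = r⁻¹ * Real.exp (-(r * s)) := by
    have h := integral_comp_mul_left_Ioi (fun y => Real.exp (-y)) s hr
    simpa [smul_eq_mul, integral_exp_neg_Ioi, integral_exp_Iic] using h
  rw [hval]
  apply ENNReal.ofReal_le_ofReal
  rw [one_div]
  have h1 : Real.exp (-(r * s)) ≤ 1 := Real.exp_le_one_iff.2 (by nlinarith)
  nlinarith [inv_nonneg.2 hr.le]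

set_option maxHeartbeats 1000000 in
theorem stmt9 (dw ds : ℝ) (hdw : dw = Real.log 5 / Real.log 2)
    (hds : ds = 2 * Real.log 3 / Real.log 5)
    (c : ℝ) (hc : 0 < c) (μ : Measure ℝ) (hsupp : μ (Set.Iic 0) = 0)
    (h1 : ∫⁻ u in Set.Ioi (0:ℝ), ENNReal.ofReal (u ^ (-(ds/2))) ∂μ < ⊤)
    (h2 : ∫⁻ x in Set.Ioi (1:ℝ), μ (Set.Ioi x) / ENNReal.ofReal x < ⊤) :
    ∫⁻ x in Set.Ioi ((8:ℝ)/9),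
      (∫⁻ u in Set.Ioi (0:ℝ),
          ENNReal.ofReal (Real.exp (-c * (x * u ^ (-(1/dw))) ^ (dw/(dw-1))) * u ^ (-(ds/2))) ∂μ)
        / ENNReal.ofReal x < ⊤ := by
  classical
  -- basic numeric facts
  have hlog2 : 0 < Real.log 2 := Real.log_pos (by norm_num)
  have hlog3 : 0 < Real.log 3 := Real.log_pos (by norm_num)
  have hlog5 : 0 < Real.log 5 := Real.log_pos (by norm_num)
  have hdw2 : 2 < dw := by
    rw [hdw, lt_div_iff₀ hlog2]
    have h45 : Real.log 4 < Real.log 5 := Real.log_lt_log (by norm_num) (by norm_num)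
    have h4 : Real.log 4 = 2 * Real.log 2 := by
      rw [show (4:ℝ) = 2 ^ (2:ℕ) by norm_num, Real.log_pow]; push_cast; ring
    linarith
  have hdw0 : 0 < dw := by linarith
  set γ := dw / (dw - 1) with hγdef
  have hγ1 : 1 < γ := by
    rw [hγdef, lt_div_iff₀ (by linarith : (0:ℝ) < dw - 1)]; linarith
  have hγ0 : 0 ≤ γ := by linarith
  set p := ds / 2 with hpdef
  have hds0 : 0 < ds := by
    rw [hds]; exact div_pos (by linarith) hlog5
  have hp0 : 0 < p := by rw [hpdef]; linarith
  set A := ∫⁻ u in Set.Ioi (0:ℝ), ENNReal.ofReal (u ^ (-p)) ∂μ with hAdef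
  -- the surrogate for u ^ (-(1/dw)), measurable on all of ℝ
  set φ : ℝ → ℝ := fun u => Real.exp (Real.log u * (-(1/dw))) with hφdef
  have hφ_meas : Measurable φ := Real.measurable_exp.comp (Real.measurable_log.mul_const _)
  have hφ_eq : ∀ u : ℝ, 0 < u → φ u = u ^ (-(1/dw)) := fun u hu =>
    (Real.rpow_def_of_pos hu _).symm
  have hφ_pos : ∀ u : ℝ, 0 < φ u := fun u => Real.exp_pos _
  -- constants
  set c' := c * (8/9 : ℝ) ^ (γ - 1) with hc'def
  have hc' : 0 < c' := mul_pos hc (Real.rpow_pos_of_pos (by norm_num) _)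
  set K := Real.log (9/8) + 1/c with hKdef
  have hlog98 : 0 ≤ Real.log (9/8) := Real.log_nonneg (by norm_num)
  have hK0 : 0 ≤ K := by rw [hKdef]; positivity
  -- the two majorant functions of x
  set G1 : ℝ → ℝ≥0∞ := fun x =>
    ENNReal.ofReal (Real.exp (-(c' * x))) * A * ENNReal.ofReal (9/8) with hG1def
  set q : ℝ → ℝ → ℝ≥0∞ := fun x u =>
    ENNReal.ofReal (Real.exp (-c * (x * φ u) ^ γ) * x⁻¹) with hqdef
  set G2 : ℝ → ℝ≥0∞ := fun x => ∫⁻ u in Set.Ioi (1:ℝ), q x u ∂μ with hG2def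
  have hq_meas : Measurable (Function.uncurry q) := by
    apply Measurable.ennreal_ofReal
    apply Measurable.mul
    · exact Real.measurable_exp.comp
        ((((Real.continuous_rpow_const hγ0).measurable.comp
          (measurable_fst.mul (hφ_meas.comp measurable_snd))).const_mul (-c)))
    · exact measurable_fst.inv
  -- Key pointwise bound for the outer integrand
  have key : ∀ x ∈ Set.Ioi ((8:ℝ)/9),
      (∫⁻ u in Set.Ioi (0:ℝ),
        ENNReal.ofReal (Real.exp (-c * (x * u ^ (-(1/dw))) ^ γ) * u ^ (-p)) ∂μ)
        / ENNReal.ofReal x ≤ G1 x + G2 x := by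
    intro x hx
    have hx9 : (8/9 : ℝ) < x := hx
    have hx0 : (0:ℝ) < x := by linarith [hx9]
    have hsplit : (∫⁻ u in Set.Ioi (0:ℝ),
        ENNReal.ofReal (Real.exp (-c * (x * u ^ (-(1/dw))) ^ γ) * u ^ (-p)) ∂μ)
        = (∫⁻ u in Set.Ioc (0:ℝ) 1,
            ENNReal.ofReal (Real.exp (-c * (x * u ^ (-(1/dw))) ^ γ) * u ^ (-p)) ∂μ)
          + (∫⁻ u in Set.Ioi (1:ℝ),
            ENNReal.ofReal (Real.exp (-c * (x * u ^ (-(1/dw))) ^ γ) * u ^ (-p)) ∂μ) := by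
      rw [← Set.Ioc_union_Ioi_eq_Ioi (zero_le_one (α := ℝ)),
        lintegral_union measurableSet_Ioi (Set.Ioc_disjoint_Ioi le_rfl)]
    rw [hsplit, ENNReal.add_div]
    have part1 : (∫⁻ u in Set.Ioc (0:ℝ) 1,
        ENNReal.ofReal (Real.exp (-c * (x * u ^ (-(1/dw))) ^ γ) * u ^ (-p)) ∂μ)
        / ENNReal.ofReal x ≤ G1 x := by
      have hIoc : (∫⁻ u in Set.Ioc (0:ℝ) 1,
          ENNReal.ofReal (Real.exp (-c * (x * u ^ (-(1/dw))) ^ γ) * u ^ (-p)) ∂μ)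
          ≤ ENNReal.ofReal (Real.exp (-(c' * x))) * A := by
        calc (∫⁻ u in Set.Ioc (0:ℝ) 1,
            ENNReal.ofReal (Real.exp (-c * (x * u ^ (-(1/dw))) ^ γ) * u ^ (-p)) ∂μ)
            ≤ ∫⁻ u in Set.Ioc (0:ℝ) 1,
              ENNReal.ofReal (Real.exp (-(c' * x))) * ENNReal.ofReal (u ^ (-p)) ∂μ := by
              apply setLIntegral_mono' measurableSet_Ioc
              intro u hu
              rw [← ENNReal.ofReal_mul (Real.exp_nonneg _)]
              apply ENNReal.ofReal_le_ofReal
              apply mul_le_mul_of_nonneg_right _ (Real.rpow_nonneg hu.1.le _)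
              -- exponential inequality
              have h1u : 1 ≤ u ^ (-(1/dw)) :=
                Real.one_le_rpow_of_pos_of_le_one_of_nonpos hu.1 hu.2
                  (neg_nonpos.2 (by positivity))
              set t := x * u ^ (-(1/dw)) with htdef
              have hxt : x ≤ t := le_mul_of_one_le_right hx0.le h1u
              have ht0 : 0 < t := lt_of_lt_of_le hx0 hxt
              have htγ : t ^ γ = t ^ (γ - 1) * t := by
                rw [show γ = γ - 1 + 1 by ring, Real.rpow_add ht0, Real.rpow_one]
                ring_nf
              have hQ : (8/9:ℝ) ^ (γ - 1) ≤ t ^ (γ - 1) :=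
                Real.rpow_le_rpow (by norm_num) (le_trans hx9.le hxt) (by linarith)
              have h89 : (0:ℝ) < (8/9:ℝ) ^ (γ - 1) := Real.rpow_pos_of_pos (by norm_num) _
              have hce : c' * x ≤ c * t ^ γ := by
                rw [htγ, hc'def]
                have hmm : (8/9:ℝ) ^ (γ - 1) * x ≤ t ^ (γ - 1) * t :=
                  mul_le_mul hQ hxt hx0.le (le_trans h89.le hQ)
                nlinarith [mul_le_mul_of_nonneg_left hmm hc.le]
              exact Real.exp_le_exp.2 (by linarith)
          _ = ENNReal.ofReal (Real.exp (-(c' * x)))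
              * ∫⁻ u in Set.Ioc (0:ℝ) 1, ENNReal.ofReal (u ^ (-p)) ∂μ :=
            lintegral_const_mul' _ _ ENNReal.ofReal_ne_top
          _ ≤ ENNReal.ofReal (Real.exp (-(c' * x))) * A := by
            apply mul_le_mul_right
            rw [hAdef]
            exact lintegral_mono_set Set.Ioc_subset_Ioi_self
      calc (∫⁻ u in Set.Ioc (0:ℝ) 1,
          ENNReal.ofReal (Real.exp (-c * (x * u ^ (-(1/dw))) ^ γ) * u ^ (-p)) ∂μ)
          / ENNReal.ofReal x
          ≤ (ENNReal.ofReal (Real.exp (-(c' * x))) * A) / ENNReal.ofReal x :=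
            ENNReal.div_le_div_right hIoc _
        _ ≤ G1 x := by
            rw [div_eq_mul_inv, hG1def]
            apply mul_le_mul_right
            have h89x : ENNReal.ofReal (8/9 : ℝ) ≤ ENNReal.ofReal x :=
              ENNReal.ofReal_le_ofReal hx9.le
            calc (ENNReal.ofReal x)⁻¹ ≤ (ENNReal.ofReal (8/9 : ℝ))⁻¹ :=
                ENNReal.inv_le_inv.2 h89x
              _ = ENNReal.ofReal ((8/9 : ℝ)⁻¹) :=
                (ENNReal.ofReal_inv_of_pos (by norm_num)).symm
              _ = ENNReal.ofReal (9/8 : ℝ) := by norm_num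
    have part2 : (∫⁻ u in Set.Ioi (1:ℝ),
        ENNReal.ofReal (Real.exp (-c * (x * u ^ (-(1/dw))) ^ γ) * u ^ (-p)) ∂μ)
        / ENNReal.ofReal x ≤ G2 x := by
      have hmono : (∫⁻ u in Set.Ioi (1:ℝ),
          ENNReal.ofReal (Real.exp (-c * (x * u ^ (-(1/dw))) ^ γ) * u ^ (-p)) ∂μ)
          ≤ ∫⁻ u in Set.Ioi (1:ℝ),
            ENNReal.ofReal (Real.exp (-c * (x * u ^ (-(1/dw))) ^ γ)) ∂μ := by
        apply setLIntegral_mono' measurableSet_Ioi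
        intro u hu
        apply ENNReal.ofReal_le_ofReal
        have h1 : u ^ (-p) ≤ 1 :=
          Real.rpow_le_one_of_one_le_of_nonpos (le_of_lt hu) (neg_nonpos.2 hp0.le)
        calc Real.exp (-c * (x * u ^ (-(1/dw))) ^ γ) * u ^ (-p)
            ≤ Real.exp (-c * (x * u ^ (-(1/dw))) ^ γ) * 1 :=
            mul_le_mul_of_nonneg_left h1 (Real.exp_nonneg _)
          _ = Real.exp (-c * (x * u ^ (-(1/dw))) ^ γ) := mul_one _
      calc (∫⁻ u in Set.Ioi (1:ℝ),
          ENNReal.ofReal (Real.exp (-c * (x * u ^ (-(1/dw))) ^ γ) * u ^ (-p)) ∂μ)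
          / ENNReal.ofReal x
          ≤ (∫⁻ u in Set.Ioi (1:ℝ),
            ENNReal.ofReal (Real.exp (-c * (x * u ^ (-(1/dw))) ^ γ)) ∂μ)
            / ENNReal.ofReal x := ENNReal.div_le_div_right hmono _
        _ = G2 x := by
            rw [div_eq_mul_inv, ← ENNReal.ofReal_inv_of_pos hx0,
              ← lintegral_mul_const' _ _ ENNReal.ofReal_ne_top, hG2def]
            apply setLIntegral_congr_fun measurableSet_Ioi
            intro u hu
            have hu0 : (0:ℝ) < u := lt_trans zero_lt_one hu
            rw [hqdef]
            simp only []
            rw [← ENNReal.ofReal_mul (Real.exp_nonneg _), hφ_eq u hu0]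
    exact add_le_add part1 part2

  -- σ-finiteness of μ on (1,∞)
  haveI hSF : SigmaFinite (μ.restrict (Set.Ioi (1:ℝ))) := by
    constructor
    refine ⟨⟨fun n => Set.Iic (n:ℝ), fun _ => Set.mem_univ _, fun n => ?_, ?_⟩⟩
    · rw [Measure.restrict_apply' measurableSet_Ioi]
      have hss : Set.Iic (n:ℝ) ∩ Set.Ioi 1 = Set.Ioc 1 (n:ℝ) := by
        ext y
        simp only [Set.mem_inter_iff, Set.mem_Iic, Set.mem_Ioi, Set.mem_Ioc]
        tauto
      rw [hss]
      calc μ (Set.Ioc 1 (n:ℝ)) = ∫⁻ _ in Set.Ioc (1:ℝ) (n:ℝ), 1 ∂μ := (setLIntegral_one _).symm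
        _ ≤ ∫⁻ u in Set.Ioc (1:ℝ) (n:ℝ),
              ENNReal.ofReal ((n:ℝ) ^ (p:ℝ)) * ENNReal.ofReal (u ^ (-p)) ∂μ := by
            apply setLIntegral_mono' measurableSet_Ioc
            intro u hu
            have hu0 : (0:ℝ) < u := lt_trans zero_lt_one hu.1
            have hup : 0 < u ^ (p:ℝ) := Real.rpow_pos_of_pos hu0 _
            have hun : u ^ (p:ℝ) ≤ (n:ℝ) ^ (p:ℝ) := Real.rpow_le_rpow hu0.le hu.2 hp0.le
            rw [← ENNReal.ofReal_mul (by positivity), ← ENNReal.ofReal_one]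
            apply ENNReal.ofReal_le_ofReal
            rw [Real.rpow_neg hu0.le, ← div_eq_mul_inv, le_div_iff₀ hup, one_mul]
            exact hun
        _ = ENNReal.ofReal ((n:ℝ) ^ (p:ℝ))
              * ∫⁻ u in Set.Ioc (1:ℝ) (n:ℝ), ENNReal.ofReal (u ^ (-p)) ∂μ :=
            lintegral_const_mul' _ _ ENNReal.ofReal_ne_top
        _ ≤ ENNReal.ofReal ((n:ℝ) ^ (p:ℝ)) * A := by
            gcongr
            rw [hAdef]
            exact lintegral_mono_set (fun y hy => lt_trans zero_lt_one hy.1)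
        _ < ⊤ := ENNReal.mul_lt_top ENNReal.ofReal_lt_top h1
    · apply Set.iUnion_eq_univ_iff.2
      intro x
      obtain ⟨n, hn⟩ := exists_nat_ge x
      exact ⟨n, hn⟩
  -- the log-moment integral L and its finiteness from h2
  set L := ∫⁻ u in Set.Ioi (1:ℝ), ENNReal.ofReal (Real.log u) ∂μ with hLdef
  have hLeq : (∫⁻ x in Set.Ioi (1:ℝ), μ (Set.Ioi x) / ENNReal.ofReal x) = L := by
    set f : ℝ → ℝ → ℝ≥0∞ := fun x u => if x < u then ENNReal.ofReal x⁻¹ else 0 with hfdef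
    have hf_meas : Measurable (Function.uncurry f) := by
      apply Measurable.ite (measurableSet_lt measurable_fst measurable_snd)
      · exact measurable_fst.inv.ennreal_ofReal
      · exact measurable_const
    have step1 : (∫⁻ x in Set.Ioi (1:ℝ), μ (Set.Ioi x) / ENNReal.ofReal x)
        = ∫⁻ x in Set.Ioi (1:ℝ), ∫⁻ u in Set.Ioi (1:ℝ), f x u ∂μ := by
      apply setLIntegral_congr_fun measurableSet_Ioi
      intro x hx
      have hx1 : (1:ℝ) < x := hx
      have hx0 : (0:ℝ) < x := lt_trans zero_lt_one hx1
      have hind : ∀ u : ℝ, f x u = (Set.Ioi x).indicator (fun _ => ENNReal.ofReal x⁻¹) u := by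
        intro u
        rw [hfdef]
        simp only [Set.indicator_apply, Set.mem_Ioi]
      have hval : (∫⁻ u in Set.Ioi (1:ℝ), f x u ∂μ) = ENNReal.ofReal x⁻¹ * μ (Set.Ioi x) := by
        rw [lintegral_congr hind, lintegral_indicator measurableSet_Ioi,
          Measure.restrict_restrict measurableSet_Ioi, Set.Ioi_inter_Ioi, setLIntegral_const,
          max_eq_left hx1.le]
      beta_reduce
      rw [hval, div_eq_mul_inv, ← ENNReal.ofReal_inv_of_pos hx0, mul_comm]
    have step2 : (∫⁻ x in Set.Ioi (1:ℝ), ∫⁻ u in Set.Ioi (1:ℝ), f x u ∂μ)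
        = ∫⁻ u in Set.Ioi (1:ℝ), (∫⁻ x in Set.Ioi (1:ℝ), f x u) ∂μ :=
      lintegral_lintegral_swap hf_meas.aemeasurable
    have step3 : (∫⁻ u in Set.Ioi (1:ℝ), (∫⁻ x in Set.Ioi (1:ℝ), f x u) ∂μ) = L := by
      apply setLIntegral_congr_fun measurableSet_Ioi
      intro u hu
      have hu1 : (1:ℝ) < u := hu
      have hind : ∀ x : ℝ, f x u = (Set.Iio u).indicator (fun x => ENNReal.ofReal x⁻¹) x := by
        intro x
        rw [hfdef]
        simp only [Set.indicator_apply, Set.mem_Iio]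
      beta_reduce
      rw [lintegral_congr hind, lintegral_indicator measurableSet_Iio,
        Measure.restrict_restrict measurableSet_Iio, Set.Iio_inter_Ioi,
        setLIntegral_congr Ioo_ae_eq_Ioc, lint_inv_Ioc zero_lt_one hu1.le, div_one]
    rw [step1, step2, step3]
  have hL : L < ⊤ := hLeq ▸ h2
  -- the per-u bound on the inner x-integral of q
  have hinner : ∀ u ∈ Set.Ioi (1:ℝ), (∫⁻ x in Set.Ioi ((8:ℝ)/9), q x u)
      ≤ ENNReal.ofReal (1/dw) * ENNReal.ofReal (Real.log u) + ENNReal.ofReal K := by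
    intro u hu
    have hu1 : (1:ℝ) < u := hu
    have hu0 : (0:ℝ) < u := lt_trans zero_lt_one hu1
    have hlogu : 0 ≤ Real.log u := Real.log_nonneg hu1.le
    set b := u ^ (1/dw : ℝ) with hbdef
    have hb1 : 1 ≤ b := Real.one_le_rpow hu1.le (by positivity)
    have hb0 : 0 < b := lt_of_lt_of_le zero_lt_one hb1
    have hφu : φ u = b⁻¹ := by
      rw [hφ_eq u hu0, Real.rpow_neg hu0.le]
    have hsplitb : Set.Ioi ((8:ℝ)/9) = Set.Ioc ((8:ℝ)/9) b ∪ Set.Ioi b :=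
      (Set.Ioc_union_Ioi_eq_Ioi (by linarith : (8:ℝ)/9 ≤ b)).symm
    rw [hsplitb, lintegral_union measurableSet_Ioi (Set.Ioc_disjoint_Ioi le_rfl)]
    have part1 : (∫⁻ x in Set.Ioc ((8:ℝ)/9) b, q x u)
        ≤ ENNReal.ofReal (1/dw) * ENNReal.ofReal (Real.log u)
          + ENNReal.ofReal (Real.log (9/8)) := by
      calc (∫⁻ x in Set.Ioc ((8:ℝ)/9) b, q x u)
          ≤ ∫⁻ x in Set.Ioc ((8:ℝ)/9) b, ENNReal.ofReal x⁻¹ := by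
            apply setLIntegral_mono' measurableSet_Ioc
            intro x hx
            have hx0 : (0:ℝ) < x := lt_trans (by norm_num) hx.1
            rw [hqdef]
            apply ENNReal.ofReal_le_ofReal
            have hxφ : 0 ≤ x * φ u := mul_nonneg hx0.le (hφ_pos u).le
            have hge : 0 ≤ (x * φ u) ^ γ := Real.rpow_nonneg hxφ _
            have hexp1 : Real.exp (-c * (x * φ u) ^ γ) ≤ 1 :=
              Real.exp_le_one_iff.2 (by nlinarith)
            nlinarith [inv_nonneg.2 hx0.le]
        _ = ENNReal.ofReal (Real.log (b / (8/9))) := lint_inv_Ioc (by norm_num) (by linarith)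
        _ ≤ _ := by
            have hlb : Real.log (b / (8/9)) = (1/dw) * Real.log u + Real.log (9/8) := by
              rw [Real.log_div hb0.ne' (by norm_num),
                show (8/9 : ℝ) = (9/8 : ℝ)⁻¹ by norm_num, Real.log_inv, hbdef,
                Real.log_rpow hu0]
              ring
            rw [hlb, ENNReal.ofReal_add (mul_nonneg (by positivity) hlogu) hlog98,
              ENNReal.ofReal_mul (by positivity : (0:ℝ) ≤ 1/dw)]
    have part2 : (∫⁻ x in Set.Ioi b, q x u) ≤ ENNReal.ofReal (1/c) := by
      calc (∫⁻ x in Set.Ioi b, q x u)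
          ≤ ∫⁻ x in Set.Ioi b, ENNReal.ofReal (b⁻¹ * Real.exp (-(c * b⁻¹ * x))) := by
            apply setLIntegral_mono' measurableSet_Ioi
            intro x hx
            have hbx : b < x := hx
            have hx0 : (0:ℝ) < x := lt_trans hb0 hbx
            rw [hqdef]
            apply ENNReal.ofReal_le_ofReal
            have ht1 : 1 ≤ x * b⁻¹ := by
              rw [← div_eq_mul_inv, le_div_iff₀ hb0, one_mul]
              exact hbx.le
            have htγ : x * b⁻¹ ≤ (x * b⁻¹) ^ γ := by
              calc x * b⁻¹ = (x * b⁻¹) ^ (1:ℝ) := (Real.rpow_one _).symm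
                _ ≤ (x * b⁻¹) ^ γ := Real.rpow_le_rpow_of_exponent_le ht1 hγ1.le
            have hexp : Real.exp (-c * (x * φ u) ^ γ) ≤ Real.exp (-(c * b⁻¹ * x)) := by
              apply Real.exp_le_exp.2
              rw [hφu]
              nlinarith [mul_le_mul_of_nonneg_left htγ hc.le]
            have hxinv : x⁻¹ ≤ b⁻¹ := inv_anti₀ hb0 hbx.le
            calc Real.exp (-c * (x * φ u) ^ γ) * x⁻¹
                ≤ Real.exp (-(c * b⁻¹ * x)) * b⁻¹ :=
                mul_le_mul hexp hxinv (inv_nonneg.2 hx0.le) (Real.exp_nonneg _)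
              _ = b⁻¹ * Real.exp (-(c * b⁻¹ * x)) := mul_comm _ _
        _ = ENNReal.ofReal b⁻¹
            * ∫⁻ x in Set.Ioi b, ENNReal.ofReal (Real.exp (-(c * b⁻¹ * x))) := by
            rw [← lintegral_const_mul' _ _ ENNReal.ofReal_ne_top]
            apply lintegral_congr
            intro x
            rw [← ENNReal.ofReal_mul (inv_nonneg.2 hb0.le)]
        _ ≤ ENNReal.ofReal b⁻¹ * ENNReal.ofReal (1 / (c * b⁻¹)) := by
            apply mul_le_mul_right
            exact lint_exp_Ioi (by positivity) (by linarith)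
        _ = ENNReal.ofReal (b⁻¹ * (1 / (c * b⁻¹))) :=
            (ENNReal.ofReal_mul (inv_nonneg.2 hb0.le)).symm
        _ = ENNReal.ofReal (1/c) := by
            congr 1
            field_simp
    calc (∫⁻ x in Set.Ioc ((8:ℝ)/9) b, q x u) + ∫⁻ x in Set.Ioi b, q x u
        ≤ (ENNReal.ofReal (1/dw) * ENNReal.ofReal (Real.log u)
            + ENNReal.ofReal (Real.log (9/8))) + ENNReal.ofReal (1/c) :=
          add_le_add part1 part2
      _ = ENNReal.ofReal (1/dw) * ENNReal.ofReal (Real.log u) + ENNReal.ofReal K := by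
          rw [add_assoc, hKdef, ENNReal.ofReal_add hlog98 (by positivity)]
  -- constants
  set C1 := ENNReal.ofReal (1/dw) + ENNReal.ofReal K with hC1def
  set C2 := ENNReal.ofReal (K * 3 ^ (p:ℝ)) with hC2def
  have hKC : ∀ u ∈ Set.Ioi (1:ℝ), ENNReal.ofReal K ≤
      C2 * ENNReal.ofReal (u ^ (-p)) + ENNReal.ofReal K * ENNReal.ofReal (Real.log u) := by
    intro u hu
    have hu1 : (1:ℝ) < u := hu
    have hu0 : (0:ℝ) < u := lt_trans zero_lt_one hu1
    by_cases hu3 : u ≤ 3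
    · have hup : 0 < u ^ (p:ℝ) := Real.rpow_pos_of_pos hu0 _
      have h3 : (1:ℝ) ≤ 3 ^ (p:ℝ) * u ^ (-p) := by
        rw [Real.rpow_neg hu0.le, ← div_eq_mul_inv, le_div_iff₀ hup, one_mul]
        exact Real.rpow_le_rpow hu0.le hu3 hp0.le
      have hKK : K ≤ K * 3 ^ (p:ℝ) * u ^ (-p) := by
        nlinarith [mul_le_mul_of_nonneg_left h3 hK0]
      calc ENNReal.ofReal K ≤ ENNReal.ofReal (K * 3 ^ (p:ℝ) * u ^ (-p)) :=
          ENNReal.ofReal_le_ofReal hKK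
        _ = C2 * ENNReal.ofReal (u ^ (-p)) := by
            rw [hC2def, ← ENNReal.ofReal_mul (by positivity)]
        _ ≤ _ := le_self_add
    · push_neg at hu3
      have hlogu : (1:ℝ) ≤ Real.log u := by
        rw [Real.le_log_iff_exp_le hu0]
        nlinarith [Real.exp_one_lt_d9]
      calc ENNReal.ofReal K = ENNReal.ofReal K * 1 := (mul_one _).symm
        _ ≤ ENNReal.ofReal K * ENNReal.ofReal (Real.log u) := by
            apply mul_le_mul_right
            rw [show (1:ℝ≥0∞) = ENNReal.ofReal 1 by simp]
            exact ENNReal.ofReal_le_ofReal hlogu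
        _ ≤ _ := le_add_self
  -- bound for the integral of G2
  have hG2int : (∫⁻ x in Set.Ioi ((8:ℝ)/9), G2 x) ≤ C1 * L + C2 * A := by
    have hswap : (∫⁻ x in Set.Ioi ((8:ℝ)/9), G2 x)
        = ∫⁻ u in Set.Ioi (1:ℝ), (∫⁻ x in Set.Ioi ((8:ℝ)/9), q x u) ∂μ :=
      lintegral_lintegral_swap hq_meas.aemeasurable
    rw [hswap]
    calc (∫⁻ u in Set.Ioi (1:ℝ), (∫⁻ x in Set.Ioi ((8:ℝ)/9), q x u) ∂μ)
        ≤ ∫⁻ u in Set.Ioi (1:ℝ),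
            (C1 * ENNReal.ofReal (Real.log u) + C2 * ENNReal.ofReal (u ^ (-p))) ∂μ := by
          apply setLIntegral_mono' measurableSet_Ioi
          intro u hu
          calc (∫⁻ x in Set.Ioi ((8:ℝ)/9), q x u)
              ≤ ENNReal.ofReal (1/dw) * ENNReal.ofReal (Real.log u) + ENNReal.ofReal K :=
              hinner u hu
            _ ≤ ENNReal.ofReal (1/dw) * ENNReal.ofReal (Real.log u)
                + (C2 * ENNReal.ofReal (u ^ (-p))
                  + ENNReal.ofReal K * ENNReal.ofReal (Real.log u)) :=
              add_le_add_right (hKC u hu) _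
            _ = C1 * ENNReal.ofReal (Real.log u) + C2 * ENNReal.ofReal (u ^ (-p)) := by
              rw [hC1def]
              ring
      _ = C1 * L + C2 * ∫⁻ u in Set.Ioi (1:ℝ), ENNReal.ofReal (u ^ (-p)) ∂μ := by
          rw [lintegral_add_left ((Real.measurable_log.ennreal_ofReal).const_mul C1),
            lintegral_const_mul' C1 _ (by
              rw [hC1def]
              exact ENNReal.add_ne_top.2 ⟨ENNReal.ofReal_ne_top, ENNReal.ofReal_ne_top⟩),
            lintegral_const_mul' C2 _ (by rw [hC2def]; exact ENNReal.ofReal_ne_top), hLdef]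
      _ ≤ C1 * L + C2 * A := by
          gcongr
          rw [hAdef]
          exact lintegral_mono_set (Set.Ioi_subset_Ioi zero_le_one)
  -- final assembly
  have hG1meas : Measurable G1 := by
    rw [hG1def]
    exact ((Real.measurable_exp.comp
      ((measurable_id.const_mul c').neg)).ennreal_ofReal.mul_const A).mul_const _
  calc (∫⁻ x in Set.Ioi ((8:ℝ)/9),
      (∫⁻ u in Set.Ioi (0:ℝ),
          ENNReal.ofReal (Real.exp (-c * (x * u ^ (-(1/dw))) ^ γ) * u ^ (-p)) ∂μ)
        / ENNReal.ofReal x)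
      ≤ ∫⁻ x in Set.Ioi ((8:ℝ)/9), (G1 x + G2 x) := setLIntegral_mono' measurableSet_Ioi key
    _ = (∫⁻ x in Set.Ioi ((8:ℝ)/9), G1 x) + ∫⁻ x in Set.Ioi ((8:ℝ)/9), G2 x :=
      lintegral_add_left hG1meas _
    _ < ⊤ := by
      rw [ENNReal.add_lt_top]
      constructor
      · have hint : MeasureTheory.IntegrableOn
            (fun x : ℝ => Real.exp (-(c' * x))) (Set.Ioi ((8:ℝ)/9)) := by
          simpa [neg_mul] using exp_neg_integrableOn_Ioi ((8:ℝ)/9) hc'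
        have hlt : (∫⁻ x in Set.Ioi ((8:ℝ)/9), ENNReal.ofReal (Real.exp (-(c' * x)))) < ⊤ :=
          hint.lintegral_lt_top
        have hG1val : (∫⁻ x in Set.Ioi ((8:ℝ)/9), G1 x)
            = (∫⁻ x in Set.Ioi ((8:ℝ)/9), ENNReal.ofReal (Real.exp (-(c' * x))))
              * A * ENNReal.ofReal (9/8) := by
          rw [hG1def, lintegral_mul_const' _ _ ENNReal.ofReal_ne_top,
            lintegral_mul_const' _ _ h1.ne]
        rw [hG1val]
        exact ENNReal.mul_lt_top (ENNReal.mul_lt_top hlt h1) ENNReal.ofReal_lt_top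
      · apply lt_of_le_of_lt hG2int
        rw [ENNReal.add_lt_top]
        constructor
        · apply ENNReal.mul_lt_top _ hL
          rw [hC1def]
          exact ENNReal.add_lt_top.2 ⟨ENNReal.ofReal_lt_top, ENNReal.ofReal_lt_top⟩
        · exact ENNReal.mul_lt_top ENNReal.ofReal_lt_top h1
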